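/- Let d ≥ 1, let C be a finite set of classes, let p ∈ [1,∞), let ν be a probability measure on ℝ^d, and let R : ℝ × ℝ → ℝ be a certified-radius function satisfying the isotropic certification property: for every measurable classifier f' : ℝ^d → C, every x ∈ ℝ^d, every class c_A ∈ C, and all reals p_A ≥ p_B such that ℙ_{ε∼ν}(f'(x+ε) = c_A) ≥ p_A and ℙ_{ε∼ν}(f'(x+ε) = c) ≤ p_B for every c ≠ c_A, it holds that for every δ ∈ ℝ^d with ‖δ‖_p ≤ R(p_A, p_B) and every class c ≠ c_A, ℙ_{ε∼ν}(f'(x+δ+ε) = c_A) ≥ ℙ_{ε∼ν}(f'(x+δ+ε) = c). Let σ ∈ ℝ^d with σ_i > 0 for all i, let μ ∈ ℝ^d, let f : ℝ^d → C be measurable, let x ∈ ℝ^d, let c'_A ∈ C, and let p'_A ≥ p'_B be reals with R(p'_A, p'_B) ≥ 0 such that ℙ_{ε∼ν}(f(x + ε⊙σ + μ) = c'_A) ≥ p'_A and ℙ_{ε∼ν}(f(x + ε⊙σ + μ) = c) ≤ p'_B for every c ≠ c'_A. Then for every δ' ∈ ℝ^d with ‖δ'‖_p ≤ (min_{1≤i≤d}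 σ_i) · R(p'_A, p'_B) and every class c ≠ c'_A, ℙ_{ε∼ν}(f(x + δ' + ε⊙σ + μ) = c'_A) ≥ ℙ_{ε∼ν}(f(x + δ' + ε⊙σ + μ) = c). -/

import Mathlib

open MeasureTheory

/-- The `ℓ_p` norm of a vector in `ℝ^d`: `(∑ i, |δ i| ^ p) ^ (1/p)`. -/
noncomputable def lpNorm {d : ℕ} (p : ℝ) (δ : Fin d → ℝ) : ℝ :=
  (∑ i, |δ i| ^ p) ^ (1 / p)

/-- Corollary: with independent anisotropic noise, robustness holds in the
`ℓ_p` ball of radius `(min_i σ_i) · R(p'_A, p'_B)`. -/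
theorem anisotropic_certified_radius_min_sigma
    {d : ℕ} (hd : 1 ≤ d)
    {C : Type} [Fintype C] [MeasurableSpace C] [MeasurableSingletonClass C]
    (p : ℝ) (hp : 1 ≤ p)
    (ν : Measure (Fin d → ℝ)) [IsProbabilityMeasure ν]
    (R : ℝ → ℝ → ℝ)
    (hiso : ∀ f' : (Fin d → ℝ) → C, Measurable f' →
      ∀ (x : Fin d → ℝ) (cA : C) (pA pB : ℝ), pB ≤ pA →
        pA ≤ (ν {ε | f' (x + ε) = cA}).toReal →
        (∀ c : C, c ≠ cA → (ν {ε | f' (x + ε) = c}).toReal ≤ pB) →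
        ∀ δ : Fin d → ℝ, lpNorm p δ ≤ R pA pB →
          ∀ c : C, c ≠ cA →
            (ν {ε | f' (x + δ + ε) = c}).toReal ≤
              (ν {ε | f' (x + δ + ε) = cA}).toReal)
    (σ : Fin d → ℝ) (hσ : ∀ i, 0 < σ i) (μ : Fin d → ℝ)
    (f : (Fin d → ℝ) → C) (hf : Measurable f)
    (x : Fin d → ℝ) (c'A : C)
    (p'A p'B : ℝ) (hpp : p'B ≤ p'A) (hR : 0 ≤ R p'A p'B)
    (hA : p'A ≤ (ν {ε | f (x + (fun i => ε i * σ i) + μ) = c'A}).toReal)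
    (hB : ∀ c : C, c ≠ c'A →
      (ν {ε | f (x + (fun i => ε i * σ i) + μ) = c}).toReal ≤ p'B) :
    ∀ δ' : Fin d → ℝ, lpNorm p δ' ≤ (⨅ i, σ i) * R p'A p'B →
      ∀ c : C, c ≠ c'A →
        (ν {ε | f (x + δ' + (fun i => ε i * σ i) + μ) = c}).toReal ≤
          (ν {ε | f (x + δ' + (fun i => ε i * σ i) + μ) = c'A}).toReal := by
  intro δ' hδ' c hc
  haveI : Nonempty (Fin d) := Fin.pos_iff_nonempty.mp hd
  set m := ⨅ i, σ i with hmdef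
  have hmle : ∀ i, m ≤ σ i := fun i => ciInf_le (Finite.bddBelow_range σ) i
  have hm : 0 < m := by
    obtain ⟨j, hj⟩ := exists_eq_ciInf_of_finite (f := σ)
    rw [hmdef, ← hj]; exact hσ j
  have hp0 : (0:ℝ) < p := lt_of_lt_of_le one_pos hp
  set δ : Fin d → ℝ := fun i => δ' i / σ i with hδdef
  -- norm bound
  have hnorm : lpNorm p δ ≤ R p'A p'B := by
    have hS : ∀ i, |δ' i / σ i| ^ p ≤ |δ' i| ^ p / m ^ p := by
      intro i
      rw [abs_div, abs_of_pos (hσ i), ← Real.div_rpow (abs_nonneg _) hm.le]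
      exact Real.rpow_le_rpow (div_nonneg (abs_nonneg _) (hσ i).le)
        (div_le_div_of_nonneg_left (abs_nonneg _) hm (hmle i)) hp0.le
    have hsum : (∑ i, |δ i| ^ p) ≤ (∑ i, |δ' i| ^ p) / m ^ p := by
      rw [Finset.sum_div]
      exact Finset.sum_le_sum fun i _ => hS i
    have h1 : lpNorm p δ ≤ ((∑ i, |δ' i| ^ p) / m ^ p) ^ (1/p) := by
      apply Real.rpow_le_rpow (Finset.sum_nonneg fun i _ => Real.rpow_nonneg (abs_nonneg _) _)
        hsum (by positivity)
    have h2 : ((∑ i, |δ' i| ^ p) / m ^ p) ^ (1/p) = lpNorm p δ' / m := by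
      rw [Real.div_rpow (Finset.sum_nonneg fun i _ => Real.rpow_nonneg (abs_nonneg _) _)
        (Real.rpow_nonneg hm.le p), ← Real.rpow_mul hm.le, mul_one_div_cancel hp0.ne',
        Real.rpow_one, _root_.lpNorm]
    rw [h2] at h1
    refine h1.trans ?_
    rw [div_le_iff₀ hm]
    calc lpNorm p δ' ≤ m * R p'A p'B := hδ'
      _ = R p'A p'B * m := mul_comm _ _
  have hf' : Measurable (fun y : Fin d → ℝ => f (x + (fun i => y i * σ i) + μ)) := by
    apply hf.comp
    fun_prop
  have key := hiso _ hf' 0 c'A p'A p'B hpp (by simpa using hA)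
    (by intro c hc'; simpa using hB c hc') δ hnorm c hc
  have hset : ∀ c0 : C, {ε : Fin d → ℝ | f ((x + fun i => (0 + δ + ε) i * σ i) + μ) = c0}
      = {ε : Fin d → ℝ | f ((x + δ' + fun i => ε i * σ i) + μ) = c0} := by
    intro c0
    have harg : ∀ ε : Fin d → ℝ, (x + fun i => (0 + δ + ε) i * σ i) + μ
        = (x + δ' + fun i => ε i * σ i) + μ := by
      intro ε; funext i
      have hne := (hσ i).ne'
      simp only [Pi.add_apply, Pi.zero_apply, hδdef]
      field_simp
      ring
    ext ε
    rw [Set.mem_setOf_eq, Set.mem_setOf_eq, harg ε]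
  rw [hset c, hset c'A] at key
  exact key
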